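/- Let f : ℂ → ℂ be an entire nonconstant function with f(z) ≠ 0 for all z, and suppose 1/f is also unbounded. Then for every R₀ > 0 there exists R > R₀ such that the circle {|z| = R} contains a point w_m with |f(w_m)| < 1 and a point w_M with |f(w_M)| > 1. -/

import Mathlib

open Metric

lemma big_on_sphere (g : ℂ → ℂ) (hg : Differentiable ℂ g) {z : ℂ} {R : ℝ}
    (hR : 0 < R) (hz : ‖z‖ ≤ R) (h1 : 1 < ‖g z‖) :
    ∃ w : ℂ, ‖w‖ = R ∧ 1 < ‖g w‖ := by
  obtain ⟨w, hwf, hmax⟩ := Complex.exists_mem_frontier_isMaxOn_norm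
    (isBounded_ball (x := (0:ℂ)) (r := R)) (nonempty_ball.2 hR)
    hg.diffContOnCl
  rw [frontier_ball _ hR.ne'] at hwf
  refine ⟨w, by simpa using hwf, ?_⟩
  have hzmem : z ∈ closure (ball (0:ℂ) R) := by
    rw [closure_ball _ hR.ne']
    simpa using hz
  have := hmax hzmem
  simp only [Function.comp] at this
  calc 1 < ‖g z‖ := h1
    _ ≤ ‖g w‖ := this

/-- If `f` is entire, nonvanishing, nonconstant, and both `f` and `1/f` are unbounded,
then on arbitrarily large circles there are simultaneously points with `|f| < 1`
and points with `|f| > 1`. -/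
theorem both_small_and_large_on_one_circle
    (f : ℂ → ℂ) (hf : Differentiable ℂ f) (h0 : ∀ z, f z ≠ 0)
    (hnc : ¬∃ c : ℂ, ∀ z, f z = c)
    (hub : ¬BddAbove (Set.range fun z => ‖f z‖))
    (hub' : ¬BddAbove (Set.range fun z => ‖1 / f z‖)) :
    ∀ R₀ : ℝ, 0 < R₀ →
      ∃ R : ℝ, R₀ < R ∧
        (∃ wm : ℂ, ‖wm‖ = R ∧ ‖f wm‖ < 1) ∧
        (∃ wM : ℂ, ‖wM‖ = R ∧ 1 < ‖f wM‖) := by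
  intro R₀ hR₀
  rw [not_bddAbove_iff] at hub hub'
  obtain ⟨_, ⟨z₁, rfl⟩, hz₁⟩ := hub 1
  obtain ⟨_, ⟨z₂, rfl⟩, hz₂⟩ := hub' 1
  set R : ℝ := max R₀ (max (‖z₁‖) (‖z₂‖)) + 1 with hRdef
  have hR : 0 < R := by positivity
  have hR₀R : R₀ < R := by
    have : R₀ ≤ max R₀ (max (‖z₁‖) (‖z₂‖)) := le_max_left _ _
    linarith
  have hz₁R : ‖z₁‖ ≤ R := by
    have : ‖z₁‖ ≤ max R₀ (max (‖z₁‖) (‖z₂‖)) :=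
      (le_max_left _ _).trans (le_max_right _ _)
    linarith
  have hz₂R : ‖z₂‖ ≤ R := by
    have : ‖z₂‖ ≤ max R₀ (max (‖z₁‖) (‖z₂‖)) :=
      (le_max_right _ _).trans (le_max_right _ _)
    linarith
  have hinv : Differentiable ℂ (fun z => 1 / f z) := by
    exact (differentiable_const 1).div hf h0
  obtain ⟨wM, hwM, hwM1⟩ := big_on_sphere f hf hR hz₁R hz₁
  obtain ⟨wm, hwm, hwm1⟩ := big_on_sphere (fun z => 1 / f z) hinv hR hz₂R hz₂
  refine ⟨R, hR₀R, ⟨wm, hwm, ?_⟩, ⟨wM, hwM, hwM1⟩⟩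
  rw [norm_div, norm_one, one_lt_div (by simpa using (h0 wm))] at hwm1
  linarith
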